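/- arXiv:1706.09795 — 5 statements merged into one kernel-verified Lean document; each statement's English description precedes it below -/
import Mathlib

section
/- Let n ≥ 1, m ≥ 1, let p, q ∈ (1, ∞) be conjugate exponents, let A be an invertible n×n real matrix, γ ≥ 0, let ω_1, …, ω_m ∈ ℝⁿ, let x, Δx ∈ ℝⁿ with ‖A⁻¹ Δx‖_p ≤ γ, and set D = 2m. Define Δφ ∈ ℝ^D as the vector whose j-th pair of components is √(2/D)(cos(ω_j ⋅ (x+Δx)) − cos(ω_j ⋅ x)) and √(2/D)(sin(ω_j ⋅ (x+Δx)) − sin(ω_j ⋅ x)). Define α_j = min(2, (γ ‖A^⊤ ω_j‖_q)²/2). Then ‖Δφ‖₂ ≤ √((4/D) Σ_{j=1}^m α_j). -/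
open Real Matrix Finset

/-- Trig key bound: `(cos(b+θ)-cos b)² + (sin(b+θ)-sin b)² = 2 - 2 cos θ ≤ min 4 θ²`. -/
lemma trig_key (b θ : ℝ) :
    (Real.cos (b + θ) - Real.cos b) ^ 2 + (Real.sin (b + θ) - Real.sin b) ^ 2
      ≤ min 4 (θ ^ 2) := by
  have h1 : (Real.cos (b + θ) - Real.cos b) ^ 2 + (Real.sin (b + θ) - Real.sin b) ^ 2
      = 2 - 2 * Real.cos θ := by
    rw [Real.cos_add, Real.sin_add]
    have h2 := Real.sin_sq_add_cos_sq b
    have h3 := Real.sin_sq_add_cos_sq θ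
    linear_combination ((Real.cos θ - 1) ^ 2 + Real.sin θ ^ 2) * h2 + h3
  rw [h1, le_min_iff]
  constructor
  · nlinarith [Real.neg_one_le_cos θ]
  · nlinarith [Real.one_sub_sq_div_two_le_cos (x := θ)]

/-- Case `p̄ = 2` of Proposition 1: the Euclidean norm of the
random-Fourier-feature uncertainty is bounded by `√((4/D) Σ_j α_j)`. -/
theorem stmt_4 (n m : ℕ) (hn : 1 ≤ n) (hm : 1 ≤ m)
    (p q : ℝ) (hp : 1 < p) (hq : 1 < q) (hpq : 1 / p + 1 / q = 1)
    (A : Matrix (Fin n) (Fin n) ℝ) (hA : IsUnit A.det)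
    (γ : ℝ) (hγ : 0 ≤ γ)
    (ω : Fin m → Fin n → ℝ) (x Δx : Fin n → ℝ)
    (h : (∑ k, |(A⁻¹ *ᵥ Δx) k| ^ p) ^ (1 / p) ≤ γ)
    (D : ℕ) (hD : D = 2 * m)
    (Δφ : Fin m × Fin 2 → ℝ)
    (hΔφ : ∀ j : Fin m,
      Δφ (j, 0) = Real.sqrt (2 / D) *
        (Real.cos (∑ k, ω j k * (x k + Δx k)) - Real.cos (∑ k, ω j k * x k)) ∧
      Δφ (j, 1) = Real.sqrt (2 / D) *
        (Real.sin (∑ k, ω j k * (x k + Δx k)) - Real.sin (∑ k, ω j k * x k)))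
    (α : Fin m → ℝ)
    (hα : ∀ j, α j = min 2 ((γ * (∑ k, |(Aᵀ *ᵥ ω j) k| ^ q) ^ (1 / q)) ^ 2 / 2)) :
    Real.sqrt (∑ i : Fin m × Fin 2, (Δφ i) ^ 2)
      ≤ Real.sqrt ((4 / D) * ∑ j : Fin m, α j) := by
  have hDpos : (0:ℝ) < D := by
    rw [hD]; positivity
  have hsq : Real.sqrt (2 / D) ^ 2 = 2 / D := Real.sq_sqrt (by positivity)
  apply Real.sqrt_le_sqrt
  rw [Fintype.sum_prod_type]
  have key : ∀ j : Fin m, ∑ i : Fin 2, Δφ (j, i) ^ 2 ≤ (4 / D) * α j := by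
    intro j
    obtain ⟨h0, h1⟩ := hΔφ j
    set Lq : ℝ := (∑ k, |(Aᵀ *ᵥ ω j) k| ^ q) ^ (1 / q) with hLq
    have hLq0 : 0 ≤ Lq := by rw [hLq]; positivity
    -- the phase shift
    set θ : ℝ := ∑ k, ω j k * Δx k with hθ
    have harg : (∑ k, ω j k * (x k + Δx k)) = (∑ k, ω j k * x k) + θ := by
      rw [hθ, ← Finset.sum_add_distrib]
      exact Finset.sum_congr rfl fun k _ => by ring
    -- Hölder bound on θ
    have hθbound : |θ| ≤ γ * Lq := by
      have hrewrite : θ = ∑ k, (Aᵀ *ᵥ ω j) k * (A⁻¹ *ᵥ Δx) k := by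
        have : (Aᵀ *ᵥ ω j) ⬝ᵥ (A⁻¹ *ᵥ Δx) = ω j ⬝ᵥ Δx := by
          rw [Matrix.mulVec_transpose, Matrix.dotProduct_mulVec, Matrix.vecMul_vecMul,
            Matrix.mul_nonsing_inv A hA, Matrix.vecMul_one]
        simpa [dotProduct, hθ] using this.symm
      have habs : |θ| ≤ ∑ k, |(Aᵀ *ᵥ ω j) k| * |(A⁻¹ *ᵥ Δx) k| := by
        rw [hrewrite]
        refine (Finset.abs_sum_le_sum_abs _ _).trans ?_
        exact le_of_eq (Finset.sum_congr rfl fun k _ => abs_mul _ _)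
      have hhold := inner_le_Lp_mul_Lq Finset.univ
        (fun k => |(Aᵀ *ᵥ ω j) k|) (fun k => |(A⁻¹ *ᵥ Δx) k|)
        (Real.holderConjugate_iff.mpr ⟨hq, by rw [inv_eq_one_div, inv_eq_one_div, add_comm]; exact hpq⟩ : Real.HolderConjugate q p)
      simp only [abs_abs] at hhold
      calc |θ| ≤ ∑ k, |(Aᵀ *ᵥ ω j) k| * |(A⁻¹ *ᵥ Δx) k| := habs
        _ ≤ Lq * (∑ k, |(A⁻¹ *ᵥ Δx) k| ^ p) ^ (1 / p) := hhold
        _ ≤ Lq * γ := by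
            exact mul_le_mul_of_nonneg_left h hLq0
        _ = γ * Lq := mul_comm _ _
    have hθsq : θ ^ 2 ≤ (γ * Lq) ^ 2 := by
      rw [← sq_abs θ]
      exact pow_le_pow_left₀ (abs_nonneg θ) hθbound 2
    have hmin : min 4 (θ ^ 2) ≤ 2 * α j := by
      rw [hα j]
      rcases le_total ((γ * Lq) ^ 2 / 2) 2 with h' | h'
      · rw [min_eq_right h']
        refine (min_le_right _ _).trans ?_
        linarith
      · rw [min_eq_left h']
        refine (min_le_left _ _).trans ?_
        norm_num
    calc ∑ i : Fin 2, Δφ (j, i) ^ 2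
        = (2 / D) * ((Real.cos ((∑ k, ω j k * x k) + θ) - Real.cos (∑ k, ω j k * x k)) ^ 2
            + (Real.sin ((∑ k, ω j k * x k) + θ) - Real.sin (∑ k, ω j k * x k)) ^ 2) := by
          rw [Fin.sum_univ_two, h0, h1, harg, mul_pow, mul_pow, hsq]; ring
      _ ≤ (2 / D) * (2 * α j) := by
          refine mul_le_mul_of_nonneg_left ((trig_key _ _).trans hmin) (by positivity)
      _ = (4 / D) * α j := by ring
  calc ∑ j : Fin m, ∑ i : Fin 2, Δφ (j, i) ^ 2
      ≤ ∑ j : Fin m, (4 / D) * α j := Finset.sum_le_sum fun j _ => key j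
    _ = (4 / D) * ∑ j : Fin m, α j := by rw [Finset.mul_sum]
end

section
/- Let n ≥ 1, m ≥ 1, let p, q ∈ (1, ∞) be conjugate exponents, let A be an invertible n×n real matrix, γ ≥ 0, let ω_1, …, ω_m ∈ ℝⁿ, let x, Δx ∈ ℝⁿ with ‖A⁻¹ Δx‖_p ≤ γ, and set D = 2m. Define w ∈ ℝ^D as the vector whose j-th pair of components is √(2/D)(cos(ω_j ⋅ Δx) − 1) and √(2/D) sin(ω_j ⋅ Δx). Define α_j = min(2, (γ ‖A^⊤ ω_j‖_q)²/2) and β_j = min(1, γ ‖A^⊤ ω_j‖_q). Then the ℓ¹ norm of w satisfies ‖w‖₁ ≤ √(2/D) Σ_{j=1}^m (α_j + β_j). -/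
open Real Matrix Finset

/-- Case `p̄ = 1` of Proposition 1: the `ℓ¹` norm of the rotated
random-Fourier-feature uncertainty is bounded by `√(2/D) Σ_j (α_j + β_j)`. -/
theorem stmt_5 (n m : ℕ) (hn : 1 ≤ n) (hm : 1 ≤ m)
    (p q : ℝ) (hp : 1 < p) (hq : 1 < q) (hpq : 1 / p + 1 / q = 1)
    (A : Matrix (Fin n) (Fin n) ℝ) (hA : IsUnit A.det)
    (γ : ℝ) (hγ : 0 ≤ γ)
    (ω : Fin m → Fin n → ℝ) (x Δx : Fin n → ℝ)
    (h : (∑ k, |(A⁻¹ *ᵥ Δx) k| ^ p) ^ (1 / p) ≤ γ)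
    (D : ℕ) (hD : D = 2 * m)
    (w : Fin m × Fin 2 → ℝ)
    (hw : ∀ j : Fin m,
      w (j, 0) = Real.sqrt (2 / D) * (Real.cos (∑ k, ω j k * Δx k) - 1) ∧
      w (j, 1) = Real.sqrt (2 / D) * Real.sin (∑ k, ω j k * Δx k))
    (α β : Fin m → ℝ)
    (hα : ∀ j, α j = min 2 ((γ * (∑ k, |(Aᵀ *ᵥ ω j) k| ^ q) ^ (1 / q)) ^ 2 / 2))
    (hβ : ∀ j, β j = min 1 (γ * (∑ k, |(Aᵀ *ᵥ ω j) k| ^ q) ^ (1 / q))) :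
    ∑ i : Fin m × Fin 2, |w i|
      ≤ Real.sqrt (2 / D) * ∑ j : Fin m, (α j + β j) := by
  have hqp : Real.HolderConjugate q p := ⟨by rw [inv_eq_one_div, inv_eq_one_div, inv_one]; linarith, by linarith, by linarith⟩
  have hc : (0:ℝ) ≤ Real.sqrt (2 / D) := Real.sqrt_nonneg _
  -- key pointwise bound
  have key : ∀ j : Fin m, |w (j, 0)| + |w (j, 1)| ≤ Real.sqrt (2 / D) * (α j + β j) := by
    intro j
    set θ : ℝ := ∑ k, ω j k * Δx k with hθ
    set Nq : ℝ := (∑ k, |(Aᵀ *ᵥ ω j) k| ^ q) ^ (1 / q) with hNq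
    have hNq0 : 0 ≤ Nq := Real.rpow_nonneg (Finset.sum_nonneg fun k _ =>
      Real.rpow_nonneg (abs_nonneg _) _) _
    -- θ = (Aᵀ ω j) ⬝ᵥ (A⁻¹ Δx)
    have hθeq : θ = ∑ k, (Aᵀ *ᵥ ω j) k * (A⁻¹ *ᵥ Δx) k := by
      have : (∑ k, (Aᵀ *ᵥ ω j) k * (A⁻¹ *ᵥ Δx) k)
          = (Aᵀ *ᵥ ω j) ⬝ᵥ (A⁻¹ *ᵥ Δx) := rfl
      rw [hθ, this, Matrix.mulVec_transpose, ← Matrix.dotProduct_mulVec,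
        Matrix.mulVec_mulVec, Matrix.mul_nonsing_inv A hA, Matrix.one_mulVec]
      rfl
    -- Hölder bound on |θ|
    have hNp : (0:ℝ) ≤ (∑ k, |(A⁻¹ *ᵥ Δx) k| ^ p) ^ (1 / p) :=
      Real.rpow_nonneg (Finset.sum_nonneg fun k _ =>
        Real.rpow_nonneg (abs_nonneg _) _) _
    have hθle : |θ| ≤ γ * Nq := by
      have h1 : θ ≤ Nq * (∑ k, |(A⁻¹ *ᵥ Δx) k| ^ p) ^ (1 / p) := by
        rw [hθeq]
        exact Real.inner_le_Lp_mul_Lq _ _ _ hqp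
      have h2 : -θ ≤ Nq * (∑ k, |(A⁻¹ *ᵥ Δx) k| ^ p) ^ (1 / p) := by
        rw [hθeq, hNq, ← Finset.sum_neg_distrib]
        have := Real.inner_le_Lp_mul_Lq Finset.univ
          (fun k => -((Aᵀ *ᵥ ω j) k)) (fun k => (A⁻¹ *ᵥ Δx) k) hqp
        simpa [neg_mul, abs_neg] using this
      have hle : |θ| ≤ Nq * (∑ k, |(A⁻¹ *ᵥ Δx) k| ^ p) ^ (1 / p) :=
        abs_le.2 ⟨by linarith, h1⟩
      calc |θ| ≤ Nq * (∑ k, |(A⁻¹ *ᵥ Δx) k| ^ p) ^ (1 / p) := hle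
        _ ≤ Nq * γ := mul_le_mul_of_nonneg_left h hNq0
        _ = γ * Nq := mul_comm _ _
    have hγN : 0 ≤ γ * Nq := mul_nonneg hγ hNq0
    -- bounds on the trig terms
    have hcosb : |Real.cos θ - 1| ≤ α j := by
      rw [hα j]
      refine le_min ?_ ?_
      · have h1 := Real.cos_le_one θ
        have h2 := Real.neg_one_le_cos θ
        rw [abs_le]; constructor <;> linarith
      · have h1 := Real.one_sub_sq_div_two_le_cos (x := θ)
        have h2 : θ ^ 2 ≤ (γ * Nq) ^ 2 := by
          have := sq_abs θ
          nlinarith [abs_nonneg θ]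
        have h3 := Real.cos_le_one θ
        rw [abs_le]; constructor <;> nlinarith
    have hsinb : |Real.sin θ| ≤ β j := by
      rw [hβ j]
      refine le_min (Real.abs_sin_le_one θ) ?_
      calc |Real.sin θ| ≤ |θ| := Real.abs_sin_le_abs
        _ ≤ γ * Nq := hθle
    obtain ⟨hw0, hw1⟩ := hw j
    rw [hw0, hw1, abs_mul, abs_mul, abs_of_nonneg hc, mul_add]
    have := mul_le_mul_of_nonneg_left hcosb hc
    have := mul_le_mul_of_nonneg_left hsinb hc
    linarith
  calc ∑ i : Fin m × Fin 2, |w i|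
      = ∑ j : Fin m, (|w (j, 0)| + |w (j, 1)|) := by
        rw [Fintype.sum_prod_type]
        exact Finset.sum_congr rfl fun j _ => by rw [Fin.sum_univ_two]
    _ ≤ ∑ j : Fin m, Real.sqrt (2 / D) * (α j + β j) :=
        Finset.sum_le_sum fun j _ => key j
    _ = Real.sqrt (2 / D) * ∑ j : Fin m, (α j + β j) := by
        rw [Finset.mul_sum]
end

section
/- Let n ≥ 1, m ≥ 1, let p, q ∈ (1, ∞) be conjugate exponents, let A be an invertible n×n real matrix, γ ≥ 0, let ω_1, …, ω_m ∈ ℝⁿ, let x, Δx ∈ ℝⁿ with ‖A⁻¹ Δx‖_p ≤ γ, and set D = 2m. Define w ∈ ℝ^D as the vector whose j-th pair of components is √(2/D)(cos(ω_j ⋅ Δx) − 1) and √(2/D) sin(ω_j ⋅ Δx). Define α_j = min(2, (γ ‖A^⊤ ω_j‖_q)²/2) and β_j = min(1, γ ‖A^⊤ ω_j‖_q). Then the ℓ^∞ norm of w satisfies ‖w‖_∞ ≤ √(2/D) max(max_{j} α_j, max_{j} β_j). -/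
open Real Matrix Finset

/-- Case `p̄ = ∞` of Proposition 1: the `ℓ^∞` norm of the rotated
random-Fourier-feature uncertainty is bounded by
`√(2/D) max(max_j α_j, max_j β_j)`. -/
theorem stmt_6 (n m : ℕ) (hn : 1 ≤ n) [NeZero m]
    (p q : ℝ) (hp : 1 < p) (hq : 1 < q) (hpq : 1 / p + 1 / q = 1)
    (A : Matrix (Fin n) (Fin n) ℝ) (hA : IsUnit A.det)
    (γ : ℝ) (hγ : 0 ≤ γ)
    (ω : Fin m → Fin n → ℝ) (x Δx : Fin n → ℝ)
    (h : (∑ k, |(A⁻¹ *ᵥ Δx) k| ^ p) ^ (1 / p) ≤ γ)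
    (D : ℕ) (hD : D = 2 * m)
    (w : Fin m × Fin 2 → ℝ)
    (hw : ∀ j : Fin m,
      w (j, 0) = Real.sqrt (2 / D) * (Real.cos (∑ k, ω j k * Δx k) - 1) ∧
      w (j, 1) = Real.sqrt (2 / D) * Real.sin (∑ k, ω j k * Δx k))
    (α β : Fin m → ℝ)
    (hα : ∀ j, α j = min 2 ((γ * (∑ k, |(Aᵀ *ᵥ ω j) k| ^ q) ^ (1 / q)) ^ 2 / 2))
    (hβ : ∀ j, β j = min 1 (γ * (∑ k, |(Aᵀ *ᵥ ω j) k| ^ q) ^ (1 / q))) :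
    (Finset.univ.sup' Finset.univ_nonempty fun i : Fin m × Fin 2 => |w i|)
      ≤ Real.sqrt (2 / D) *
        max (Finset.univ.sup' Finset.univ_nonempty α)
            (Finset.univ.sup' Finset.univ_nonempty β) := by
  have hs : (0:ℝ) ≤ Real.sqrt (2 / D) := Real.sqrt_nonneg _
  apply Finset.sup'_le
  rintro ⟨j, s⟩ -
  -- the dot product rewrite
  set t : ℝ := ∑ k, ω j k * Δx k with ht
  set N : ℝ := (∑ k, |(Aᵀ *ᵥ ω j) k| ^ q) ^ (1 / q) with hN
  have hN0 : 0 ≤ N := Real.rpow_nonneg (Finset.sum_nonneg fun k _ =>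
    Real.rpow_nonneg (abs_nonneg _) _) _
  -- t = (Aᵀ ω j) ⬝ (A⁻¹ Δx)
  have key : t = ∑ k, (A⁻¹ *ᵥ Δx) k * (Aᵀ *ᵥ ω j) k := by
    have : ω j ⬝ᵥ Δx = ω j ⬝ᵥ (A *ᵥ (A⁻¹ *ᵥ Δx)) := by
      rw [Matrix.mulVec_mulVec, A.mul_nonsing_inv hA, Matrix.one_mulVec]
    calc t = ω j ⬝ᵥ Δx := rfl
      _ = ω j ⬝ᵥ (A *ᵥ (A⁻¹ *ᵥ Δx)) := this
      _ = (ω j ᵥ* A) ⬝ᵥ (A⁻¹ *ᵥ Δx) := (Matrix.dotProduct_mulVec _ _ _)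
      _ = (Aᵀ *ᵥ ω j) ⬝ᵥ (A⁻¹ *ᵥ Δx) := by rw [Matrix.mulVec_transpose]
      _ = ∑ k, (A⁻¹ *ᵥ Δx) k * (Aᵀ *ᵥ ω j) k := by
          simp [dotProduct, mul_comm]
  have hconj : Real.HolderConjugate p q := Real.holderConjugate_iff.mpr ⟨hp, by simpa [one_div] using hpq⟩
  have habs : |t| ≤ γ * N := by
    have h1 : ∀ f : Fin n → ℝ, (∑ k, f k * (Aᵀ *ᵥ ω j) k) ≤
        (∑ k, |f k| ^ p) ^ (1 / p) * N := fun f =>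
      Real.inner_le_Lp_mul_Lq Finset.univ f _ hconj
    have hp0 : 0 ≤ (∑ k, |(A⁻¹ *ᵥ Δx) k| ^ p) ^ (1 / p) :=
      Real.rpow_nonneg (Finset.sum_nonneg fun k _ =>
        Real.rpow_nonneg (abs_nonneg _) _) _
    rw [abs_le]
    constructor
    · have := h1 (fun k => -(A⁻¹ *ᵥ Δx) k)
      simp only [abs_neg, neg_mul] at this
      have h2 : -t ≤ (∑ k, |(A⁻¹ *ᵥ Δx) k| ^ p) ^ (1 / p) * N := by
        rw [key]; simpa [Finset.sum_neg_distrib] using this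
      have := h2.trans (mul_le_mul_of_nonneg_right h hN0)
      linarith
    · have := h1 (A⁻¹ *ᵥ Δx)
      rw [key]
      exact this.trans (mul_le_mul_of_nonneg_right h hN0)
  -- now split on s
  have hub : ∀ j', α j' ≤ Finset.univ.sup' Finset.univ_nonempty α :=
    fun j' => Finset.le_sup' α (Finset.mem_univ j')
  have hub' : ∀ j', β j' ≤ Finset.univ.sup' Finset.univ_nonempty β :=
    fun j' => Finset.le_sup' β (Finset.mem_univ j')
  fin_cases s
  · have hw0 := (hw j).1
    have hcos : |Real.cos t - 1| ≤ α j := by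
      rw [hα]
      refine le_min ?_ ?_
      · have := Real.neg_one_le_cos t
        have := Real.cos_le_one t
        rw [abs_le]; constructor <;> linarith
      · have h1 : |Real.cos t - 1| ≤ t ^ 2 / 2 := by
          have hsin : |Real.sin (t/2)| ≤ |t/2| := Real.abs_sin_le_abs
          have h2 : Real.cos t = 1 - 2 * Real.sin (t/2) ^ 2 := by
            have hc := Real.cos_two_mul (t/2)
            have ht2 : 2 * (t/2) = t := by ring
            rw [ht2] at hc
            nlinarith [Real.sin_sq_add_cos_sq (t/2)]
          rw [h2]
          have : Real.sin (t/2) ^ 2 ≤ (t/2) ^ 2 := by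
            rw [← sq_abs, ← sq_abs (t/2)]
            exact pow_le_pow_left₀ (abs_nonneg _) hsin 2
          rw [abs_le]; constructor <;> nlinarith
        refine h1.trans ?_
        have : t ^ 2 ≤ (γ * N) ^ 2 := by
          rw [← sq_abs t]
          exact pow_le_pow_left₀ (abs_nonneg _) habs 2
        linarith
    calc |w (j, 0)| = Real.sqrt (2 / D) * |Real.cos t - 1| := by
          rw [hw0, abs_mul, abs_of_nonneg hs]
      _ ≤ Real.sqrt (2 / D) * α j := by
          exact mul_le_mul_of_nonneg_left hcos hs
      _ ≤ _ := by
          have := hub j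
          have : Real.sqrt (2/D) * α j ≤ Real.sqrt (2/D) *
              (Finset.univ.sup' Finset.univ_nonempty α) :=
            mul_le_mul_of_nonneg_left this hs
          exact this.trans (mul_le_mul_of_nonneg_left (le_max_left _ _) hs)
  · have hw1 := (hw j).2
    have hsin : |Real.sin t| ≤ β j := by
      rw [hβ]
      exact le_min (Real.abs_sin_le_one t) (Real.abs_sin_le_abs.trans habs)
    calc |w (j, 1)| = Real.sqrt (2 / D) * |Real.sin t| := by
          rw [hw1, abs_mul, abs_of_nonneg hs]
      _ ≤ Real.sqrt (2 / D) * β j := mul_le_mul_of_nonneg_left hsin hs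
      _ ≤ _ := by
          have h3 : Real.sqrt (2/D) * β j ≤ Real.sqrt (2/D) *
              (Finset.univ.sup' Finset.univ_nonempty β) :=
            mul_le_mul_of_nonneg_left (hub' j) hs
          exact h3.trans (mul_le_mul_of_nonneg_left (le_max_right _ _) hs)
end

section
/- Let n ≥ 1, σ > 0, γ ≥ 0, let A be an invertible n×n real matrix, and let x, z, Δ ∈ ℝⁿ with ‖A⁻¹ Δ‖₂ ≤ γ. Set k = exp(−‖x−z‖₂²/(2σ²)), τ = exp(−2γ‖A^⊤(x−z)‖₂/(2σ²)), and ρ = exp(−γ²‖A‖²/(2σ²)), where ‖A‖ is the operator norm of A. Then (exp(−‖x+Δ−z‖₂²/(2σ²)) − exp(−‖x−z‖₂²/(2σ²)))² ≤ k² (1/τ² + 1) − 2 ρ k² τ. -/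
open Real Matrix Finset

private lemma norm_symm_eq {n : ℕ} (v : Fin n → ℝ) :
    ‖(WithLp.equiv 2 (Fin n → ℝ)).symm v‖ = Real.sqrt (∑ k, (v k) ^ 2) := by
  rw [EuclideanSpace.norm_eq]
  congr 1
  refine Finset.sum_congr rfl fun k _ => ?_
  rw [Real.norm_eq_abs, sq_abs]
  rfl

private lemma cs_bound {n : ℕ} (u v : Fin n → ℝ) :
    |∑ k, u k * v k| ≤ Real.sqrt (∑ k, (u k) ^ 2) * Real.sqrt (∑ k, (v k) ^ 2) := by
  have := abs_real_inner_le_norm ((WithLp.equiv 2 (Fin n → ℝ)).symm u)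
    ((WithLp.equiv 2 (Fin n → ℝ)).symm v)
  rw [norm_symm_eq, norm_symm_eq] at this
  simpa [PiLp.inner_apply, RCLike.inner_apply, WithLp.equiv_symm_apply, PiLp.toLp_apply, mul_comm]
    using this

private lemma core (D b s t c m : ℝ) (hD : 0 < D) (hsc : |s| ≤ c)
    (ht0 : 0 ≤ t) (htm : t ≤ m) :
    (Real.exp (-(b + 2 * s + t) / D) - Real.exp (-b / D)) ^ 2
      ≤ Real.exp (-b / D) ^ 2 * (1 / Real.exp (-(2 * c) / D) ^ 2 + 1)
        - 2 * Real.exp (-m / D) * Real.exp (-b / D) ^ 2 * Real.exp (-(2 * c) / D) := by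
  have habs := abs_le.mp hsc
  rw [show -(b + 2 * s + t) / D = -b / D + -(2 * s + t) / D from by ring, Real.exp_add]
  set K0 := Real.exp (-b / D) with hK0
  set e := Real.exp (-(2 * s + t) / D) with he
  set τ0 := Real.exp (-(2 * c) / D) with hτ0
  set ρ0 := Real.exp (-m / D) with hρ0
  have he_le : e ≤ 1 / τ0 := by
    rw [he, hτ0, one_div, ← Real.exp_neg, Real.exp_le_exp,
      show -(-(2 * c) / D) = 2 * c / D from by ring, div_le_div_iff₀ hD hD]
    nlinarith [habs.1]
  have he_ge : ρ0 * τ0 ≤ e := by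
    rw [he, hρ0, hτ0, ← Real.exp_add, Real.exp_le_exp, ← add_div,
      div_le_div_iff₀ hD hD]
    nlinarith [habs.2]
  have hτ0pos : 0 < τ0 := Real.exp_pos _
  have hρ0pos : 0 < ρ0 := Real.exp_pos _
  have hepos : 0 < e := Real.exp_pos _
  have hK0sq : 0 ≤ K0 ^ 2 := sq_nonneg _
  have key : e ^ 2 - 2 * e ≤ 1 / τ0 ^ 2 - 2 * (ρ0 * τ0) := by
    have h1 : e ^ 2 ≤ (1 / τ0) ^ 2 := pow_le_pow_left₀ hepos.le he_le 2
    have h2 : (1 / τ0) ^ 2 = 1 / τ0 ^ 2 := by ring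
    nlinarith
  nlinarith [mul_le_mul_of_nonneg_left key hK0sq, sq_nonneg (K0 * e - K0)]

/-- Per-landmark bound of Proposition 2: with `K = k_σ(x,z)`,
`τ = exp(−2γ‖Aᵀ(x−z)‖₂/(2σ²))` and `ρ = exp(−γ²‖A‖²/(2σ²))`,
the squared Gaussian kernel difference satisfies
`(k_σ(x+Δ,z) − k_σ(x,z))² ≤ K²(1/τ² + 1) − 2ρK²τ`. -/
theorem stmt_11 (n : ℕ) (hn : 1 ≤ n) (σ : ℝ) (hσ : 0 < σ) (γ : ℝ) (hγ : 0 ≤ γ)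
    (A : Matrix (Fin n) (Fin n) ℝ) (hA : IsUnit A.det)
    (x z Δ : Fin n → ℝ)
    (h : Real.sqrt (∑ k, ((A⁻¹ *ᵥ Δ) k) ^ 2) ≤ γ)
    (K τ ρ : ℝ)
    (hK : K = Real.exp (-(∑ k, (x k - z k) ^ 2) / (2 * σ ^ 2)))
    (hτ : τ = Real.exp (-(2 * γ * Real.sqrt (∑ k, ((Aᵀ *ᵥ (x - z)) k) ^ 2)) / (2 * σ ^ 2)))
    (hρ : ρ = Real.exp (-(γ ^ 2 * ‖Matrix.toEuclideanCLM (𝕜 := ℝ) A‖ ^ 2) / (2 * σ ^ 2))) :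
    (Real.exp (-(∑ k, (x k + Δ k - z k) ^ 2) / (2 * σ ^ 2))
        - Real.exp (-(∑ k, (x k - z k) ^ 2) / (2 * σ ^ 2))) ^ 2
      ≤ K ^ 2 * (1 / τ ^ 2 + 1) - 2 * ρ * K ^ 2 * τ := by
  set s : ℝ := ∑ k, (x k - z k) * Δ k with hs
  set t : ℝ := ∑ k, (Δ k) ^ 2 with ht
  set c : ℝ := γ * Real.sqrt (∑ k, ((Aᵀ *ᵥ (x - z)) k) ^ 2) with hc
  set m : ℝ := γ ^ 2 * ‖Matrix.toEuclideanCLM (𝕜 := ℝ) A‖ ^ 2 with hm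
  have hΔ : A *ᵥ (A⁻¹ *ᵥ Δ) = Δ := by
    rw [mulVec_mulVec, Matrix.mul_nonsing_inv A hA, one_mulVec]
  have hsc : |s| ≤ c := by
    have key : s = ∑ k, ((Aᵀ *ᵥ (x - z)) k) * ((A⁻¹ *ᵥ Δ) k) := by
      have e1 : ∑ k, ((Aᵀ *ᵥ (x - z)) k) * ((A⁻¹ *ᵥ Δ) k)
          = (Aᵀ *ᵥ (x - z)) ⬝ᵥ (A⁻¹ *ᵥ Δ) := rfl
      rw [e1, Matrix.dotProduct_mulVec, Matrix.mulVec_transpose,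
        Matrix.vecMul_vecMul, Matrix.mul_nonsing_inv A hA, Matrix.vecMul_one]
      simp [hs, dotProduct, Pi.sub_apply]
    rw [key]
    calc |∑ k, ((Aᵀ *ᵥ (x - z)) k) * ((A⁻¹ *ᵥ Δ) k)|
        ≤ Real.sqrt (∑ k, ((Aᵀ *ᵥ (x - z)) k) ^ 2) *
            Real.sqrt (∑ k, ((A⁻¹ *ᵥ Δ) k) ^ 2) := cs_bound _ _
      _ ≤ Real.sqrt (∑ k, ((Aᵀ *ᵥ (x - z)) k) ^ 2) * γ :=
          mul_le_mul_of_nonneg_left h (Real.sqrt_nonneg _)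
      _ = c := by rw [hc, mul_comm]
  have ht0 : 0 ≤ t := Finset.sum_nonneg fun k _ => sq_nonneg _
  have htm : t ≤ m := by
    have h1 : ‖Matrix.toEuclideanCLM (𝕜 := ℝ) A ((WithLp.equiv 2 (Fin n → ℝ)).symm (A⁻¹ *ᵥ Δ))‖
        ≤ ‖Matrix.toEuclideanCLM (𝕜 := ℝ) A‖ * ‖(WithLp.equiv 2 (Fin n → ℝ)).symm (A⁻¹ *ᵥ Δ)‖ :=
      (Matrix.toEuclideanCLM (𝕜 := ℝ) A).le_opNorm _
    rw [WithLp.equiv_symm_apply, Matrix.toEuclideanCLM_toLp, hΔ, ← WithLp.equiv_symm_apply,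
      norm_symm_eq, norm_symm_eq] at h1
    have h2 : Real.sqrt t ≤ ‖Matrix.toEuclideanCLM (𝕜 := ℝ) A‖ * γ :=
      h1.trans (mul_le_mul_of_nonneg_left h (norm_nonneg _))
    have h3 : (Real.sqrt t) ^ 2 ≤ (‖Matrix.toEuclideanCLM (𝕜 := ℝ) A‖ * γ) ^ 2 :=
      pow_le_pow_left₀ (Real.sqrt_nonneg _) h2 2
    rw [Real.sq_sqrt ht0] at h3
    rw [hm]; nlinarith [h3]
  have hab : (∑ k, (x k + Δ k - z k) ^ 2) = (∑ k, (x k - z k) ^ 2) + 2 * s + t := by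
    rw [hs, ht, Finset.mul_sum, ← Finset.sum_add_distrib, ← Finset.sum_add_distrib]
    refine Finset.sum_congr rfl fun k _ => ?_
    ring
  have hσ2 : (0:ℝ) < 2 * σ ^ 2 := by positivity
  have main := core (2 * σ ^ 2) (∑ k, (x k - z k) ^ 2) s t c m hσ2 hsc ht0 htm
  rw [hK, hρ, hτ, hab,
    show -(2 * γ * Real.sqrt (∑ k, ((Aᵀ *ᵥ (x - z)) k) ^ 2)) = -(2 * c) from by
      rw [hc]; ring]
  exact main
end

section
/- Let n ≥ 1, m ≥ 1, r ≥ 1, σ > 0, γ ≥ 0, let A be an invertible n×n real matrix, let x̂_1, …, x̂_m ∈ ℝⁿ be landmark points, let u_1, …, u_r ∈ ℝ^m be vectors each of Euclidean norm at most 1, and let x, Δ ∈ ℝⁿ with ‖A⁻¹ Δ‖₂ ≤ γ. Define k̂(y) ∈ ℝ^m by k̂(y)_j = exp(−‖y−x̂_j‖₂²/(2σ²)), and define v ∈ ℝ^r by v_l = u_l ⋅ (k̂(x+Δ) − k̂(x)). Set k_j = exp(−‖x−x̂_j‖₂²/(2σ²)), τ_j = exp(−2γ‖A^⊤(x−x̂_j)‖₂/(2σ²)),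 ρ = exp(−γ²‖A‖²/(2σ²)). Then ‖v‖₂ ≤ √( r ( Σ_{j=1}^m k_j² (1/τ_j² + 1) − 2 ρ Σ_{j=1}^m k_j² τ_j ) ). -/
open Real Matrix Finset

lemma cs_abs {ι : Type*} (s : Finset ι) (f g : ι → ℝ) :
    |∑ i ∈ s, f i * g i| ≤ Real.sqrt (∑ i ∈ s, f i ^ 2) * Real.sqrt (∑ i ∈ s, g i ^ 2) := by
  rw [← Real.sqrt_sq_eq_abs, ← Real.sqrt_mul (by positivity)]
  exact Real.sqrt_le_sqrt (Finset.sum_mul_sq_le_sq_mul_sq s f g)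


/-- Proposition 2 of the paper: Nyström bounding scheme. With Gaussian kernel
vector `khat(y)_j = exp(−‖y−xhat_j‖²/(2σ²))`, orthonormal-type vectors `u_l` of
norm at most one, and `v_l = u_l ⋅ (khat(x+Δ) − khat(x))`, the Euclidean norm of `v`
is bounded by `√(r(Σ_j k_j²(1/τ_j² + 1) − 2ρ Σ_j k_j² τ_j))`. -/
theorem stmt_12 (n m r : ℕ) (hn : 1 ≤ n) (hm : 1 ≤ m) (hr : 1 ≤ r)
    (σ : ℝ) (hσ : 0 < σ) (γ : ℝ) (hγ : 0 ≤ γ)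
    (A : Matrix (Fin n) (Fin n) ℝ) (hA : IsUnit A.det)
    (xhat : Fin m → Fin n → ℝ)
    (u : Fin r → Fin m → ℝ)
    (hu : ∀ l, Real.sqrt (∑ j, (u l j) ^ 2) ≤ 1)
    (x Δ : Fin n → ℝ)
    (h : Real.sqrt (∑ k, ((A⁻¹ *ᵥ Δ) k) ^ 2) ≤ γ)
    (khat : (Fin n → ℝ) → Fin m → ℝ)
    (hkhat : ∀ y j, khat y j = Real.exp (-(∑ k, (y k - xhat j k) ^ 2) / (2 * σ ^ 2)))
    (v : Fin r → ℝ)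
    (hv : ∀ l, v l = ∑ j, u l j * (khat (x + Δ) j - khat x j))
    (K τ : Fin m → ℝ) (ρ : ℝ)
    (hK : ∀ j, K j = Real.exp (-(∑ k, (x k - xhat j k) ^ 2) / (2 * σ ^ 2)))
    (hτ : ∀ j, τ j =
      Real.exp (-(2 * γ * Real.sqrt (∑ k, ((Aᵀ *ᵥ (x - xhat j)) k) ^ 2)) / (2 * σ ^ 2)))
    (hρ : ρ = Real.exp (-(γ ^ 2 * ‖Matrix.toEuclideanCLM (𝕜 := ℝ) A‖ ^ 2) / (2 * σ ^ 2))) :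
    Real.sqrt (∑ l, (v l) ^ 2)
      ≤ Real.sqrt (r * (∑ j, (K j) ^ 2 * (1 / (τ j) ^ 2 + 1)
          - 2 * ρ * ∑ j, (K j) ^ 2 * τ j)) := by
  have hσ2 : (0:ℝ) < 2 * σ ^ 2 := by positivity
  set nA := ‖Matrix.toEuclideanCLM (𝕜 := ℝ) A‖ with hnA
  have hnA0 : 0 ≤ nA := norm_nonneg _
  -- norm of matrix-vector product
  have hmv : ∀ (B : Matrix (Fin n) (Fin n) ℝ) (w : Fin n → ℝ),
      Real.sqrt (∑ k, ((B *ᵥ w) k) ^ 2)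
        ≤ ‖Matrix.toEuclideanCLM (𝕜 := ℝ) B‖ * Real.sqrt (∑ k, (w k) ^ 2) := by
    intro B w
    have h1 : ∀ (y : Fin n → ℝ),
        ‖(WithLp.equiv 2 (Fin n → ℝ)).symm y‖ = Real.sqrt (∑ k, (y k) ^ 2) := by
      intro y
      rw [EuclideanSpace.norm_eq]
      congr 1; exact Finset.sum_congr rfl fun i _ => by simp [sq_abs]
    have h2 := (Matrix.toEuclideanCLM (𝕜 := ℝ) B).le_opNorm ((WithLp.equiv 2 (Fin n → ℝ)).symm w)
    rw [WithLp.equiv_symm_apply] at h1 h2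
    rwa [Matrix.toEuclideanCLM_toLp, h1, h1] at h2
  -- Δ = A *ᵥ (A⁻¹ *ᵥ Δ)
  have hΔeq : Δ = A *ᵥ (A⁻¹ *ᵥ Δ) := by
    rw [Matrix.mulVec_mulVec, Matrix.mul_nonsing_inv A hA, Matrix.one_mulVec]
  -- bound on ∑ Δ²
  have hΔsq : ∑ k, (Δ k) ^ 2 ≤ γ ^ 2 * nA ^ 2 := by
    have h1 : Real.sqrt (∑ k, (Δ k) ^ 2) ≤ nA * γ := by
      calc Real.sqrt (∑ k, (Δ k) ^ 2)
          = Real.sqrt (∑ k, ((A *ᵥ (A⁻¹ *ᵥ Δ)) k) ^ 2) := by rw [← hΔeq]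
        _ ≤ nA * Real.sqrt (∑ k, ((A⁻¹ *ᵥ Δ) k) ^ 2) := hmv A _
        _ ≤ nA * γ := by apply mul_le_mul_of_nonneg_left h hnA0
    have h0 : (0:ℝ) ≤ ∑ k, (Δ k) ^ 2 := Finset.sum_nonneg fun k _ => sq_nonneg (Δ k)
    nlinarith [Real.sq_sqrt h0, Real.sqrt_nonneg (∑ k, (Δ k) ^ 2)]
  -- cross term bound
  set g : Fin m → ℝ := fun j => γ * Real.sqrt (∑ k, ((Aᵀ *ᵥ (x - xhat j)) k) ^ 2) with hgdef
  have hg0 : ∀ j, 0 ≤ g j := fun j => mul_nonneg hγ (Real.sqrt_nonneg _)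
  have hcross : ∀ j, |∑ k, Δ k * (x k - xhat j k)| ≤ g j := by
    intro j
    have hdot : ∑ k, Δ k * (x k - xhat j k)
        = ∑ k, (A⁻¹ *ᵥ Δ) k * ((Aᵀ *ᵥ (x - xhat j)) k) := by
      have : Δ ⬝ᵥ (x - xhat j) = (A⁻¹ *ᵥ Δ) ⬝ᵥ (Aᵀ *ᵥ (x - xhat j)) := by
        rw [Matrix.dotProduct_mulVec, Matrix.vecMul_transpose, ← hΔeq]
      simpa [dotProduct, Pi.sub_apply] using this
    calc |∑ k, Δ k * (x k - xhat j k)|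
        ≤ Real.sqrt (∑ k, ((A⁻¹ *ᵥ Δ) k) ^ 2)
            * Real.sqrt (∑ k, ((Aᵀ *ᵥ (x - xhat j)) k) ^ 2) := by
          rw [hdot]; exact cs_abs _ _ _
      _ ≤ g j := mul_le_mul_of_nonneg_right h (Real.sqrt_nonneg _)
  have hτval : ∀ j, τ j = Real.exp (-(2 * g j) / (2 * σ ^ 2)) := by
    intro j; rw [hτ j]; rw [hgdef]; ring_nf
  -- quadratic expansion
  have hexp : ∀ j, ∑ k, ((x + Δ) k - xhat j k) ^ 2
      = (∑ k, (x k - xhat j k) ^ 2)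
        + (2 * ∑ k, Δ k * (x k - xhat j k) + ∑ k, (Δ k) ^ 2) := by
    intro j
    rw [Finset.mul_sum, ← Finset.sum_add_distrib, ← Finset.sum_add_distrib]
    exact Finset.sum_congr rfl fun k _ => by simp only [Pi.add_apply]; ring
  set b : Fin m → ℝ := fun j => ∑ k, (x k - xhat j k) ^ 2 with hbdef
  set c : Fin m → ℝ := fun j => ∑ k, Δ k * (x k - xhat j k) with hcdef
  set e : ℝ := ∑ k, (Δ k) ^ 2 with hedef
  have he0 : 0 ≤ e := Finset.sum_nonneg fun k _ => sq_nonneg _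
  have hW : ∀ j, khat (x + Δ) j = Real.exp (-(b j + (2 * c j + e)) / (2 * σ ^ 2)) := by
    intro j; rw [hkhat, hexp j]
  have hKval : ∀ j, K j = Real.exp (-(b j) / (2 * σ ^ 2)) := fun j => hK j
  have hτpos : ∀ j, 0 < τ j := fun j => by rw [hτval j]; exact Real.exp_pos _
  have hKpos : ∀ j, 0 < K j := fun j => by rw [hKval j]; exact Real.exp_pos _
  have hρpos : 0 < ρ := by rw [hρ]; exact Real.exp_pos _
  -- upper bound
  have hub : ∀ j, khat (x + Δ) j ≤ K j / τ j := by
    intro j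
    rw [hW j, hKval j, hτval j, ← Real.exp_sub]
    apply Real.exp_le_exp.mpr
    rw [div_sub_div_same, div_le_div_iff_of_pos_right hσ2]
    have := (abs_le.mp (hcross j)).1
    nlinarith [he0]
  -- lower bound
  have hlb : ∀ j, ρ * τ j * K j ≤ khat (x + Δ) j := by
    intro j
    rw [hW j, hKval j, hτval j, hρ, ← Real.exp_add, ← Real.exp_add]
    apply Real.exp_le_exp.mpr
    rw [← add_div, ← add_div, div_le_div_iff_of_pos_right hσ2]
    have h1 := (abs_le.mp (hcross j)).2
    have h2 : e ≤ γ ^ 2 * nA ^ 2 := hΔsq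
    nlinarith
  -- per-j difference bound
  have hdj : ∀ j, (khat (x + Δ) j - khat x j) ^ 2
      ≤ (K j) ^ 2 * (1 / (τ j) ^ 2 + 1) - 2 * ρ * ((K j) ^ 2 * τ j) := by
    intro j
    have hxj : khat x j = K j := by rw [hkhat, hK]
    rw [hxj]
    have hW0 : 0 ≤ khat (x + Δ) j := by rw [hW j]; exact (Real.exp_pos _).le
    have h1 : (khat (x + Δ) j) ^ 2 ≤ (K j) ^ 2 / (τ j) ^ 2 := by
      have := hub j
      have hq : K j / τ j ≥ 0 := div_nonneg (hKpos j).le (hτpos j).le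
      nlinarith [div_pow (K j) (τ j) 2]
    have h2 : ρ * τ j * (K j) ^ 2 ≤ khat (x + Δ) j * K j :=
      by nlinarith [hlb j, (hKpos j).le]
    have hd : (khat (x + Δ) j - K j) ^ 2
        = (khat (x + Δ) j) ^ 2 + (K j) ^ 2 - 2 * (khat (x + Δ) j * K j) := by ring
    rw [hd]
    have h3 : (K j) ^ 2 * (1 / (τ j) ^ 2 + 1) = (K j) ^ 2 / (τ j) ^ 2 + (K j) ^ 2 := by
      ring
    linarith
  -- sum of differences
  set D : ℝ := ∑ j, (khat (x + Δ) j - khat x j) ^ 2 with hDdef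
  have hD0 : 0 ≤ D := Finset.sum_nonneg fun j _ => sq_nonneg _
  have hDle : D ≤ ∑ j, (K j) ^ 2 * (1 / (τ j) ^ 2 + 1) - 2 * ρ * ∑ j, (K j) ^ 2 * τ j := by
    calc D ≤ ∑ j, ((K j) ^ 2 * (1 / (τ j) ^ 2 + 1) - 2 * ρ * ((K j) ^ 2 * τ j)) :=
        Finset.sum_le_sum fun j _ => hdj j
      _ = ∑ j, (K j) ^ 2 * (1 / (τ j) ^ 2 + 1) - 2 * ρ * ∑ j, (K j) ^ 2 * τ j := by
        rw [Finset.sum_sub_distrib, Finset.mul_sum]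
  -- per-l bound via Cauchy-Schwarz
  have hvl : ∀ l, (v l) ^ 2 ≤ D := by
    intro l
    have hu2 : ∑ j, (u l j) ^ 2 ≤ 1 := by
      have h1 := hu l
      have h0 : (0:ℝ) ≤ ∑ j, (u l j) ^ 2 := Finset.sum_nonneg fun j _ => sq_nonneg (u l j)
      nlinarith [Real.sq_sqrt h0, Real.sqrt_nonneg (∑ j, (u l j) ^ 2)]
    calc (v l) ^ 2 = (∑ j, u l j * (khat (x + Δ) j - khat x j)) ^ 2 := by rw [hv l]
      _ ≤ (∑ j, (u l j) ^ 2) * D :=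
        Finset.sum_mul_sq_le_sq_mul_sq _ _ _
      _ ≤ 1 * D := mul_le_mul_of_nonneg_right hu2 hD0
      _ = D := one_mul D
  apply Real.sqrt_le_sqrt
  calc ∑ l, (v l) ^ 2 ≤ ∑ _l : Fin r, D := Finset.sum_le_sum fun l _ => hvl l
    _ = r * D := by rw [Finset.sum_const, Finset.card_fin, nsmul_eq_mul]
    _ ≤ r * (∑ j, (K j) ^ 2 * (1 / (τ j) ^ 2 + 1) - 2 * ρ * ∑ j, (K j) ^ 2 * τ j) := by
        apply mul_le_mul_of_nonneg_left hDle (Nat.cast_nonneg r)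
end
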